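/- Let n ≥ 1 be a natural number, σ > 0, and ε ∈ (0,1). If e = (e₁,…,eₙ) is distributed according to the n-fold product of gaussianReal 0 σ² (i.e., the eᵢ are i.i.d. Gaussian with mean 0 and variance σ²), then P(Σ_{i=1}^n eᵢ² ≤ σ²n/(1−ε)) ≥ 1 − exp(−ε²n/4). -/

import Mathlib

open MeasureTheory ProbabilityTheory Real
open scoped ENNReal NNReal

set_option linter.unusedSectionVars false
set_option linter.unusedVariables false
set_option linter.deprecated false


lemma aux_exp_ineq (ε : ℝ) (h0 : 0 < ε) (h1 : ε < 1) :
    (Real.sqrt (1 - ε))⁻¹ ≤ Real.exp (ε / (2 * (1 - ε)) - ε ^ 2 / 4) := by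
  have h1' : 0 < 1 - ε := by linarith
  set T : ℝ := ε / (1 - ε) - ε ^ 2 / 2 with hTdef
  have hεd : ε ^ 2 / 2 ≤ ε / (1 - ε) := by
    rw [div_le_div_iff₀ (by norm_num) h1']; nlinarith
  have hT : 0 ≤ T := by simp only [hTdef, sub_nonneg]; exact hεd
  have hq := Real.quadratic_le_exp_of_nonneg hT
  have hkey : (1 - ε)⁻¹ ≤ Real.exp T := by
    refine le_trans ?_ hq
    have ha : (1 - ε) * (1 - ε)⁻¹ = 1 := mul_inv_cancel₀ h1'.ne'
    have hd : ε / (1 - ε) = ε * (1 - ε)⁻¹ := div_eq_mul_inv _ _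
    set a := (1 - ε)⁻¹ with hadef
    have ha0 : 0 < a := inv_pos.mpr h1'
    have hTa : T = ε * a - ε ^ 2 / 2 := by rw [hTdef, hd]
    rw [hTa]
    nlinarith [sq_nonneg (ε * a - ε), sq_nonneg a, mul_pos h0 ha0]
  have h2 : ε / (2 * (1 - ε)) - ε ^ 2 / 4 = T / 2 := by
    rw [hTdef]; field_simp; ring
  rw [h2, Real.exp_half]
  rw [← Real.sqrt_inv]
  exact Real.sqrt_le_sqrt hkey

section
variable (σ ε : ℝ) (hσ : 0 < σ) (hε0 : 0 < ε) (hε1 : ε < 1)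

lemma aux_density_eq (x : ℝ) :
    gaussianPDFReal 0 ⟨σ ^ 2, sq_nonneg σ⟩ x * Real.exp (ε / (2 * σ ^ 2) * x ^ 2)
      = (Real.sqrt (2 * π * σ ^ 2))⁻¹ * Real.exp (-((1 - ε) / (2 * σ ^ 2)) * x ^ 2) := by
  show (√(2 * π * σ ^ 2))⁻¹ * rexp (-(x - 0) ^ 2 / (2 * σ ^ 2)) * rexp (ε / (2 * σ ^ 2) * x ^ 2) = _
  push_cast
  rw [mul_assoc, ← Real.exp_add]
  congr 2
  ring

include hσ in
lemma gauss_withDensity :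
    gaussianReal 0 ⟨σ ^ 2, sq_nonneg σ⟩
      = volume.withDensity fun x =>
          ((Real.toNNReal (gaussianPDFReal 0 ⟨σ ^ 2, sq_nonneg σ⟩ x) : ℝ≥0) : ℝ≥0∞) := by
  have hv : (⟨σ ^ 2, sq_nonneg σ⟩ : ℝ≥0) ≠ 0 := by
    refine fun h => absurd (congrArg NNReal.toReal h) ?_
    exact pow_ne_zero 2 hσ.ne'
  rw [gaussianReal_of_var_ne_zero 0 hv]
  rfl

include hσ hε0 hε1 in
lemma gauss_mgf_sq :
    ∫ x, Real.exp (ε / (2 * σ ^ 2) * x ^ 2) ∂(gaussianReal 0 ⟨σ ^ 2, sq_nonneg σ⟩)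
      = (Real.sqrt (1 - ε))⁻¹ := by
  have h1' : (0:ℝ) < 1 - ε := by linarith
  have hσ2 : (0:ℝ) < σ ^ 2 := by positivity
  have hb : (0:ℝ) < (1 - ε) / (2 * σ ^ 2) := by positivity
  erw [gauss_withDensity σ hσ,
    integral_withDensity_eq_integral_smul
      ((measurable_gaussianPDFReal 0 _).real_toNNReal) _]
  have : ∀ x : ℝ, (Real.toNNReal (gaussianPDFReal 0 ⟨σ ^ 2, sq_nonneg σ⟩ x) : ℝ≥0)
      • Real.exp (ε / (2 * σ ^ 2) * x ^ 2)
      = (Real.sqrt (2 * π * σ ^ 2))⁻¹ * Real.exp (-((1 - ε) / (2 * σ ^ 2)) * x ^ 2) := by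
    intro x
    erw [NNReal.smul_def, smul_eq_mul, Real.coe_toNNReal _ (gaussianPDFReal_nonneg _ _ _)]
    exact aux_density_eq σ ε x
  simp_rw [this]
  rw [integral_const_mul, integral_gaussian]
  have h2π : (0:ℝ) < 2 * π * σ ^ 2 := by positivity
  have h3 : π / ((1 - ε) / (2 * σ ^ 2)) = (2 * π * σ ^ 2) / (1 - ε) := by
    field_simp
  rw [h3, Real.sqrt_div h2π.le]
  have hs : (0:ℝ) < Real.sqrt (2 * π * σ ^ 2) := Real.sqrt_pos.mpr h2π
  field_simp

include hσ hε0 hε1 in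
lemma gauss_int_sq :
    Integrable (fun x => Real.exp (ε / (2 * σ ^ 2) * x ^ 2))
      (gaussianReal 0 ⟨σ ^ 2, sq_nonneg σ⟩) := by
  have h1' : (0:ℝ) < 1 - ε := by linarith
  have hb : (0:ℝ) < (1 - ε) / (2 * σ ^ 2) := by positivity
  erw [gauss_withDensity σ hσ,
    integrable_withDensity_iff_integrable_smul
      ((measurable_gaussianPDFReal 0 _).real_toNNReal)]
  have : ∀ x : ℝ, (Real.toNNReal (gaussianPDFReal 0 ⟨σ ^ 2, sq_nonneg σ⟩ x) : ℝ≥0)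
      • Real.exp (ε / (2 * σ ^ 2) * x ^ 2)
      = (Real.sqrt (2 * π * σ ^ 2))⁻¹ * Real.exp (-((1 - ε) / (2 * σ ^ 2)) * x ^ 2) := by
    intro x
    erw [NNReal.smul_def, smul_eq_mul, Real.coe_toNNReal _ (gaussianPDFReal_nonneg _ _ _)]
    exact aux_density_eq σ ε x
  simp_rw [this]
  exact (integrable_exp_neg_mul_sq hb).const_mul _
end

theorem chi_square_upper_tail (n : ℕ) (hn : 1 ≤ n) (σ ε : ℝ) (hσ : 0 < σ)
    (hε0 : 0 < ε) (hε1 : ε < 1) :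
    ENNReal.ofReal (1 - Real.exp (-(ε ^ 2 * (n : ℝ)) / 4)) ≤
      (Measure.pi fun _ : Fin n => gaussianReal 0 ⟨σ ^ 2, sq_nonneg σ⟩)
        {e : Fin n → ℝ | ∑ i, e i ^ 2 ≤ σ ^ 2 * (n : ℝ) / (1 - ε)} := by
  have h1' : (0:ℝ) < 1 - ε := by linarith
  have hσ2 : (0:ℝ) < σ ^ 2 := by positivity
  letI : MeasureSpace ℝ := ⟨gaussianReal 0 ⟨σ ^ 2, sq_nonneg σ⟩⟩
  set ν : Measure (Fin n → ℝ) :=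
    Measure.pi fun _ : Fin n => gaussianReal 0 ⟨σ ^ 2, sq_nonneg σ⟩ with hν
  have hνvol : ν = (volume : Measure (Fin n → ℝ)) := volume_pi.symm
  haveI : IsProbabilityMeasure (volume : Measure ℝ) :=
    instIsProbabilityMeasureGaussianReal 0 _
  haveI : IsProbabilityMeasure ν := by infer_instance
  set X : (Fin n → ℝ) → ℝ := fun e => ∑ i, e i ^ 2 with hX
  have hXmeas : Measurable X := by
    exact Finset.measurable_sum _ fun i _ => (measurable_pi_apply i).pow_const 2
  set A : ℝ := σ ^ 2 * (n : ℝ) / (1 - ε) with hA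
  have hs0 : (0:ℝ) ≤ ε / (2 * σ ^ 2) := by positivity
  have hprod : (fun e : Fin n → ℝ => Real.exp (ε / (2 * σ ^ 2) * X e))
      = fun e => ∏ i, (fun x : ℝ => Real.exp (ε / (2 * σ ^ 2) * x ^ 2)) (e i) := by
    funext e
    rw [hX]
    rw [Finset.mul_sum, Real.exp_sum]
  have hint : Integrable (fun e => Real.exp (ε / (2 * σ ^ 2) * X e)) ν := by
    rw [hprod, hνvol]
    exact Integrable.fintype_prod fun i => gauss_int_sq σ ε hσ hε0 hε1
  have hmgf : mgf X ν (ε / (2 * σ ^ 2)) = ((Real.sqrt (1 - ε))⁻¹) ^ n := by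
    have : mgf X ν (ε / (2 * σ ^ 2))
        = ∫ e, Real.exp (ε / (2 * σ ^ 2) * X e) ∂ν := rfl
    rw [this, hprod, hνvol, volume_pi,
      integral_fintype_prod_eq_pow (ι := Fin n) (fun x : ℝ => Real.exp (ε / (2 * σ ^ 2) * x ^ 2)),
      Fintype.card_fin]
    rw [show (volume : Measure ℝ) = gaussianReal 0 ⟨σ ^ 2, sq_nonneg σ⟩ from rfl,
      gauss_mgf_sq σ ε hσ hε0 hε1]
  have hcher := measure_ge_le_exp_mul_mgf (X := X) (μ := ν) (t := ε / (2 * σ ^ 2)) A hs0 hint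
  have hbound : Real.exp (-(ε / (2 * σ ^ 2)) * A) * mgf X ν (ε / (2 * σ ^ 2))
      ≤ Real.exp (-(ε ^ 2 * (n : ℝ)) / 4) := by
    rw [hmgf]
    calc Real.exp (-(ε / (2 * σ ^ 2)) * A) * ((Real.sqrt (1 - ε))⁻¹) ^ n
        ≤ Real.exp (-(ε / (2 * σ ^ 2)) * A)
            * (Real.exp (ε / (2 * (1 - ε)) - ε ^ 2 / 4)) ^ n := by
          exact mul_le_mul_of_nonneg_left
            (pow_le_pow_left₀ (by positivity) (aux_exp_ineq ε hε0 hε1) n)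
            (Real.exp_nonneg _)
      _ = Real.exp (-(ε / (2 * σ ^ 2)) * A + (n : ℝ) * (ε / (2 * (1 - ε)) - ε ^ 2 / 4)) := by
          rw [← Real.exp_nat_mul, ← Real.exp_add]
      _ = Real.exp (-(ε ^ 2 * (n : ℝ)) / 4) := by
          congr 1
          rw [hA]
          field_simp
          ring
  have hTmeas : MeasurableSet {e : Fin n → ℝ | A ≤ X e} :=
    measurableSet_le measurable_const hXmeas
  have hTB : ν {e | A ≤ X e} ≤ ENNReal.ofReal (Real.exp (-(ε ^ 2 * (n : ℝ)) / 4)) := by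
    rw [← ENNReal.ofReal_toReal (measure_ne_top ν _)]
    exact ENNReal.ofReal_le_ofReal (hcher.trans hbound)
  calc ENNReal.ofReal (1 - Real.exp (-(ε ^ 2 * (n : ℝ)) / 4))
      = 1 - ENNReal.ofReal (Real.exp (-(ε ^ 2 * (n : ℝ)) / 4)) := by
        rw [ENNReal.ofReal_sub _ (Real.exp_nonneg _), ENNReal.ofReal_one]
    _ ≤ 1 - ν {e | A ≤ X e} := tsub_le_tsub_left hTB 1
    _ = ν {e | A ≤ X e}ᶜ := (prob_compl_eq_one_sub hTmeas).symm
    _ ≤ ν {e : Fin n → ℝ | ∑ i, e i ^ 2 ≤ A} := by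
        refine measure_mono fun e he => ?_
        simp only [Set.mem_compl_iff, Set.mem_setOf_eq, not_le] at he ⊢
        exact he.le
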